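/- Let P be a Macaulay poset satisfying that the upper shadow of each full level is the entire next level. If the disjoint union of two copies of P is Macaulay with respect to the union simplicial order, then P is additive. -/

import Mathlib

open Finset

instance {α : Type*} [Fintype α] : Fintype (WithBot α) := inferInstanceAs (Fintype (Option α))
instance {α : Type*} [Fintype α] : Fintype (WithTop α) := inferInstanceAs (Fintype (Option α))

variable {α : Type*}

open Classical in
noncomputable def shadow [PartialOrder α] [Fintype α] (A : Finset α) : Finset α :=
  Finset.univ.filter (fun b => ∃ a ∈ A, a ⋖ b)

def IsRankFn [PartialOrder α] (rank : α → ℕ) : Prop :=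
  (∃ x, rank x = 0 ∧ ∀ y, x ≤ y) ∧ ∀ a b : α, a ⋖ b → rank b = rank a + 1

def IsInitSeg [PartialOrder α] (rank : α → ℕ) (lt : α → α → Prop) (d : ℕ)
    (S : Finset α) : Prop :=
  (∀ x ∈ S, rank x = d) ∧ ∀ a ∈ S, ∀ b, rank b = d → lt a b → b ∈ S

def MacaulayWith [PartialOrder α] [Fintype α] (rank : α → ℕ)
    (lt : α → α → Prop) : Prop :=
  IsTrichotomous α lt ∧ IsTrans α lt ∧ IsIrrefl α lt ∧
  (∀ d (A S : Finset α), (∀ x ∈ A, rank x = d) → IsInitSeg rank lt d S →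
    S.card = A.card → (shadow S).card ≤ (shadow A).card) ∧
  (∀ d (S : Finset α), IsInitSeg rank lt d S → IsInitSeg rank lt (d + 1) (shadow S))

def IsMacaulay [PartialOrder α] [Fintype α] (rank : α → ℕ) : Prop :=
  ∃ lt : α → α → Prop, MacaulayWith rank lt

abbrev Wedge (P Q : Type*) [PartialOrder P] [PartialOrder Q] [OrderBot P] [OrderBot Q] :=
  WithBot ({p : P // p ≠ ⊥} ⊕ {q : Q // q ≠ ⊥})

def wedgeRank {P Q : Type*} [PartialOrder P] [PartialOrder Q] [OrderBot P] [OrderBot Q]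
    (rP : P → ℕ) (rQ : Q → ℕ) : Wedge P Q → ℕ :=
  WithBot.recBotCoe 0 (Sum.elim (fun p => rP p.1) (fun q => rQ q.1))

open Classical in
noncomputable def wedgeInl {P Q : Type*} [PartialOrder P] [PartialOrder Q] [OrderBot P]
    [OrderBot Q] (p : P) : Wedge P Q :=
  if h : p = ⊥ then ⊥ else
    ((Sum.inl ⟨p, h⟩ : {p : P // p ≠ ⊥} ⊕ {q : Q // q ≠ ⊥}) : Wedge P Q)

open Classical in
noncomputable def wedgeInr {P Q : Type*} [PartialOrder P] [PartialOrder Q] [OrderBot P]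
    [OrderBot Q] (q : Q) : Wedge P Q :=
  if h : q = ⊥ then ⊥ else
    ((Sum.inr ⟨q, h⟩ : {p : P // p ≠ ⊥} ⊕ {q : Q // q ≠ ⊥}) : Wedge P Q)

abbrev Diamond (P Q : Type*) [PartialOrder P] [PartialOrder Q] [OrderBot P] [OrderBot Q]
    [OrderTop P] [OrderTop Q] :=
  WithBot (WithTop ({p : P // p ≠ ⊥ ∧ p ≠ ⊤} ⊕ {q : Q // q ≠ ⊥ ∧ q ≠ ⊤}))

def diamondRank {P Q : Type*} [PartialOrder P] [PartialOrder Q] [OrderBot P] [OrderBot Q]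
    [OrderTop P] [OrderTop Q] (rP : P → ℕ) (rQ : Q → ℕ) (s : ℕ) : Diamond P Q → ℕ :=
  WithBot.recBotCoe 0 (WithTop.recTopCoe s (Sum.elim (fun p => rP p.1) (fun q => rQ q.1)))

def diamondInl {P Q : Type*} [PartialOrder P] [PartialOrder Q] [OrderBot P] [OrderBot Q]
    [OrderTop P] [OrderTop Q] (p : {p : P // p ≠ ⊥ ∧ p ≠ ⊤}) : Diamond P Q :=
  (((Sum.inl p : {p : P // p ≠ ⊥ ∧ p ≠ ⊤} ⊕ {q : Q // q ≠ ⊥ ∧ q ≠ ⊤}) :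
    WithTop ({p : P // p ≠ ⊥ ∧ p ≠ ⊤} ⊕ {q : Q // q ≠ ⊥ ∧ q ≠ ⊤})) : Diamond P Q)

abbrev Box (a b : ℕ) := Fin a × Fin b

def boxRank {a b : ℕ} : Box a b → ℕ := fun p => p.1.val + p.2.val

abbrev BoxF {n : ℕ} (d : Fin n → ℕ) := ∀ i, Fin (d i + 1)

def boxFRank {n : ℕ} {d : Fin n → ℕ} : BoxF d → ℕ := fun x => ∑ i, (x i).val

def diamondInr {P Q : Type*} [PartialOrder P] [PartialOrder Q] [OrderBot P] [OrderBot Q]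
    [OrderTop P] [OrderTop Q] (q : {q : Q // q ≠ ⊥ ∧ q ≠ ⊤}) : Diamond P Q :=
  (((Sum.inr q : {p : P // p ≠ ⊥ ∧ p ≠ ⊤} ⊕ {q : Q // q ≠ ⊥ ∧ q ≠ ⊤}) :
    WithTop ({p : P // p ≠ ⊥ ∧ p ≠ ⊤} ⊕ {q : Q // q ≠ ⊥ ∧ q ≠ ⊤})) : Diamond P Q)

abbrev WedgeFam {ι : Type*} (P : ι → Type*) [∀ i, PartialOrder (P i)]
    [∀ i, OrderBot (P i)] :=
  WithBot (Σ i, {p : P i // p ≠ ⊥})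

def wedgeFamRank {ι : Type*} {P : ι → Type*} [∀ i, PartialOrder (P i)]
    [∀ i, OrderBot (P i)] (rank : ∀ i, P i → ℕ) : WedgeFam P → ℕ :=
  WithBot.recBotCoe 0 (fun s => rank s.1 s.2.1)

abbrev DiamondFam {ι : Type*} (P : ι → Type*) [∀ i, PartialOrder (P i)]
    [∀ i, OrderBot (P i)] [∀ i, OrderTop (P i)] :=
  WithBot (WithTop (Σ i, {p : P i // p ≠ ⊥ ∧ p ≠ ⊤}))

def diamondFamRank {ι : Type*} {P : ι → Type*} [∀ i, PartialOrder (P i)]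
    [∀ i, OrderBot (P i)] [∀ i, OrderTop (P i)] (rank : ∀ i, P i → ℕ) (s : ℕ) :
    DiamondFam P → ℕ :=
  WithBot.recBotCoe 0 (WithTop.recTopCoe s (fun x => rank x.1 x.2.1))

open Classical in
/-- A segment of a level: an order-interval for the total order within the level. -/
def IsSeg {α : Type*} [PartialOrder α] (rank : α → ℕ) (lt : α → α → Prop) (d : ℕ)
    (S : Finset α) : Prop :=
  (∀ x ∈ S, rank x = d) ∧
  ∀ a ∈ S, ∀ b ∈ S, ∀ c, rank c = d → lt a c → lt c b → c ∈ S

/-- A final segment of a level: closed downwards within the level. -/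
def IsFinalSeg {α : Type*} [PartialOrder α] (rank : α → ℕ) (lt : α → α → Prop) (d : ℕ)
    (S : Finset α) : Prop :=
  (∀ x ∈ S, rank x = d) ∧ ∀ a ∈ S, ∀ b, rank b = d → lt b a → b ∈ S

-- The new shadow of a segment A of level d: its upper shadow minus the upper shadow of
-- the set of elements of level d larger than all elements of A.
open Classical in
noncomputable def newShadow {α : Type*} [PartialOrder α] [Fintype α] (rank : α → ℕ)
    (lt : α → α → Prop) (d : ℕ) (A : Finset α) : Finset α :=
  shadow A \ shadow (Finset.univ.filter (fun b => rank b = d ∧ ∀ a ∈ A, lt a b))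

/-- Additivity of a Macaulay poset. -/
def IsAdditive {α : Type*} [PartialOrder α] [Fintype α] (rank : α → ℕ)
    (lt : α → α → Prop) : Prop :=
  (∀ d (A B : Finset α), IsInitSeg rank lt d A → IsSeg rank lt d B → A.card = B.card →
    (newShadow rank lt d B).card ≤ (newShadow rank lt d A).card) ∧
  (∀ d (B C : Finset α), IsSeg rank lt d B → IsFinalSeg rank lt d C → B.card = C.card →
    (newShadow rank lt d C).card ≤ (newShadow rank lt d B).card)

/-- The union simplicial order on the disjoint union of two copies of a poset. -/
def usSum {α : Type*} (rank : α → ℕ) (lt : α → α → Prop) : α ⊕ α → α ⊕ α → Prop :=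
  fun x y =>
    Sum.elim rank rank x < Sum.elim rank rank y ∨
    (Sum.elim rank rank x = Sum.elim rank rank y ∧
      (match x, y with
       | Sum.inl a, Sum.inl b => lt a b
       | Sum.inl _, Sum.inr _ => True
       | Sum.inr _, Sum.inl _ => False
       | Sum.inr a, Sum.inr b => lt a b))

section Aux

variable [PartialOrder α] [Fintype α] [DecidableEq α]

lemma mem_shadow {A : Finset α} {x : α} : x ∈ _root_.shadow A ↔ ∃ a ∈ A, a ⋖ x := by
  simp [_root_.shadow]

lemma shadow_union (A B : Finset α) :
    _root_.shadow (A ∪ B) = _root_.shadow A ∪ _root_.shadow B := by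
  ext x
  simp only [mem_shadow, Finset.mem_union]
  constructor
  · rintro ⟨a, (h | h), hc⟩
    exacts [Or.inl ⟨a, h, hc⟩, Or.inr ⟨a, h, hc⟩]
  · rintro (⟨a, h, hc⟩ | ⟨a, h, hc⟩)
    exacts [⟨a, Or.inl h, hc⟩, ⟨a, Or.inr h, hc⟩]

lemma shadow_empty' : _root_.shadow (∅ : Finset α) = ∅ := by
  ext x; simp [mem_shadow]

omit [Fintype α] [DecidableEq α] in
lemma inl_covBy_inl_iff {a b : α} : (Sum.inl a : α ⊕ α) ⋖ Sum.inl b ↔ a ⋖ b := by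
  constructor
  · rintro ⟨h1, h2⟩
    refine ⟨by simpa using h1, fun c hc hc' => h2 (c := Sum.inl c) (by simpa) (by simpa)⟩
  · rintro ⟨h1, h2⟩
    refine ⟨by simpa, ?_⟩
    rintro (c | c) hc hc'
    · exact h2 (by simpa using hc) (by simpa using hc')
    · exact Sum.not_inl_lt_inr hc

omit [Fintype α] [DecidableEq α] in
lemma inr_covBy_inr_iff {a b : α} : (Sum.inr a : α ⊕ α) ⋖ Sum.inr b ↔ a ⋖ b := by
  constructor
  · rintro ⟨h1, h2⟩
    refine ⟨by simpa using h1, fun c hc hc' => h2 (c := Sum.inr c) (by simpa) (by simpa)⟩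
  · rintro ⟨h1, h2⟩
    refine ⟨by simpa, ?_⟩
    rintro (c | c) hc hc'
    · exact Sum.not_inr_lt_inl hc
    · exact h2 (by simpa using hc) (by simpa using hc')

def inlE : α ↪ α ⊕ α := ⟨Sum.inl, Sum.inl_injective⟩
def inrE : α ↪ α ⊕ α := ⟨Sum.inr, Sum.inr_injective⟩

lemma shadow_map_union (X Y : Finset α) :
    _root_.shadow (X.map inlE ∪ Y.map inrE)
      = (_root_.shadow X).map inlE ∪ (_root_.shadow Y).map inrE := by
  ext (z | z) <;>
    simp only [mem_shadow, Finset.mem_union, Finset.mem_map, inlE, inrE,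
      Function.Embedding.coeFn_mk]
  · constructor
    · rintro ⟨a, (⟨x, hx, rfl⟩ | ⟨x, hx, rfl⟩), hc⟩
      · exact Or.inl ⟨z, ⟨x, hx, inl_covBy_inl_iff.1 hc⟩, rfl⟩
      · exact absurd hc.1 Sum.not_inr_lt_inl
    · rintro (⟨w, ⟨x, hx, hc⟩, hw⟩ | ⟨_, _, h⟩)
      · obtain rfl : w = z := Sum.inl_injective hw
        exact ⟨Sum.inl x, Or.inl ⟨x, hx, rfl⟩, inl_covBy_inl_iff.2 hc⟩
      · exact absurd h (by simp)
  · constructor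
    · rintro ⟨a, (⟨x, hx, rfl⟩ | ⟨x, hx, rfl⟩), hc⟩
      · exact absurd hc.1 Sum.not_inl_lt_inr
      · exact Or.inr ⟨z, ⟨x, hx, inr_covBy_inr_iff.1 hc⟩, rfl⟩
    · rintro (⟨_, _, h⟩ | ⟨w, ⟨x, hx, hc⟩, hw⟩)
      · exact absurd h (by simp)
      · obtain rfl : w = z := Sum.inr_injective hw
        exact ⟨Sum.inr x, Or.inr ⟨x, hx, rfl⟩, inr_covBy_inr_iff.2 hc⟩

omit [PartialOrder α] [Fintype α] in
lemma disjoint_map_inl_inr (X Y : Finset α) : Disjoint (X.map inlE) (Y.map inrE) := by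
  rw [Finset.disjoint_left]
  rintro a ha hb
  simp only [Finset.mem_map, inlE, inrE, Function.Embedding.coeFn_mk] at ha hb
  obtain ⟨x, _, rfl⟩ := ha
  obtain ⟨y, _, h⟩ := hb
  exact Sum.inl_ne_inr h.symm

omit [PartialOrder α] [Fintype α] in
lemma card_map_union (X Y : Finset α) :
    (X.map inlE ∪ Y.map inrE).card = X.card + Y.card := by
  rw [Finset.card_union_of_disjoint (disjoint_map_inl_inr X Y), Finset.card_map, Finset.card_map]

lemma card_shadow_map_union (X Y : Finset α) :
    (_root_.shadow (X.map inlE ∪ Y.map inrE)).card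
      = (_root_.shadow X).card + (_root_.shadow Y).card := by
  rw [shadow_map_union, card_map_union]

end Aux
section Aux2

variable [PartialOrder α] [Fintype α] [DecidableEq α]
variable {rank : α → ℕ} {lt : α → α → Prop}

open Classical in
lemma newShadow_eq (d : ℕ) (B F : Finset α)
    (hF : ∀ x, x ∈ F ↔ rank x = d ∧ ∀ a ∈ B, lt a x) :
    newShadow rank lt d B = _root_.shadow B \ _root_.shadow F := by
  ext x
  simp only [newShadow, Finset.mem_sdiff, mem_shadow, Finset.mem_filter, Finset.mem_univ,
    true_and, hF]

lemma newShadow_card_eq (d : ℕ) (B F : Finset α)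
    (hF : ∀ x, x ∈ F ↔ rank x = d ∧ ∀ a ∈ B, lt a x) :
    (newShadow rank lt d B).card + (_root_.shadow F).card
      = (_root_.shadow (B ∪ F)).card := by
  rw [newShadow_eq d B F hF, shadow_union, Finset.card_sdiff_add_card]

lemma F_initSeg (htr : ∀ a b c, lt a b → lt b c → lt a c) (d : ℕ) (B F : Finset α)
    (hF : ∀ x, x ∈ F ↔ rank x = d ∧ ∀ a ∈ B, lt a x) :
    IsInitSeg rank lt d F := by
  refine ⟨fun x hx => ((hF x).1 hx).1, fun a ha b hb hab => ?_⟩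
  exact (hF b).2 ⟨hb, fun c hc => htr _ _ _ (((hF a).1 ha).2 c hc) hab⟩

lemma BF_initSeg (httri : ∀ a b, lt a b ∨ a = b ∨ lt b a)
    (htr : ∀ a b c, lt a b → lt b c → lt a c)
    (d : ℕ) (B F : Finset α) (hB : IsSeg rank lt d B)
    (hF : ∀ x, x ∈ F ↔ rank x = d ∧ ∀ a ∈ B, lt a x) :
    IsInitSeg rank lt d (B ∪ F) := by
  refine ⟨fun x hx => ?_, fun a ha b hb hab => ?_⟩
  · rcases Finset.mem_union.1 hx with h | h
    exacts [hB.1 x h, ((hF x).1 h).1]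
  · rcases Finset.mem_union.1 ha with haB | haF
    · by_cases hbB : b ∈ B
      · exact Finset.mem_union_left _ hbB
      · refine Finset.mem_union_right _ ((hF b).2 ⟨hb, fun c hc => ?_⟩)
        rcases httri c b with h | h | h
        · exact h
        · exact absurd (h ▸ hc) hbB
        · exact absurd (hB.2 a haB c hc b hb hab h) hbB
    · exact Finset.mem_union_right _ ((hF b).2
        ⟨hb, fun c hc => htr _ _ _ (((hF a).1 haF).2 c hc) hab⟩)

lemma B_F_disjoint (hir : ∀ a, ¬ lt a a) (d : ℕ) (B F : Finset α)
    (hF : ∀ x, x ∈ F ↔ rank x = d ∧ ∀ a ∈ B, lt a x) :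
    Disjoint B F := by
  rw [Finset.disjoint_left]
  intro x hxB hxF
  exact hir x (((hF x).1 hxF).2 x hxB)

lemma usInit_inr (d : ℕ) (S : Finset α) (hS : IsInitSeg rank lt d S) :
    IsInitSeg (Sum.elim rank rank) (usSum rank lt) d (S.map inrE) := by
  constructor
  · rintro x hx
    simp only [Finset.mem_map, inrE, Function.Embedding.coeFn_mk] at hx
    obtain ⟨s, hs, rfl⟩ := hx
    exact hS.1 s hs
  · rintro a ha b hb hab
    simp only [Finset.mem_map, inrE, Function.Embedding.coeFn_mk] at ha ⊢
    obtain ⟨s, hs, rfl⟩ := ha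
    rcases hab with h | ⟨he, hm⟩
    · have hrk : Sum.elim rank rank (Sum.inr s : α ⊕ α) = d := hS.1 s hs
      rw [hrk, hb] at h; exact absurd h (lt_irrefl d)
    · rcases b with b | b
      · exact absurd hm (by simp)
      · exact ⟨b, hS.2 s hs b hb hm, rfl⟩

lemma usInit_mix (d : ℕ) (T L : Finset α) (hT : IsInitSeg rank lt d T)
    (hL : ∀ x, x ∈ L ↔ rank x = d) :
    IsInitSeg (Sum.elim rank rank) (usSum rank lt) d (T.map inlE ∪ L.map inrE) := by
  constructor
  · rintro x hx
    rcases Finset.mem_union.1 hx with h | h <;>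
      simp only [Finset.mem_map, inlE, inrE, Function.Embedding.coeFn_mk] at h
    · obtain ⟨s, hs, rfl⟩ := h; exact hT.1 s hs
    · obtain ⟨s, hs, rfl⟩ := h; exact (hL s).1 hs
  · rintro a ha b hb hab
    have hrk : Sum.elim rank rank a = d := by
      rcases Finset.mem_union.1 ha with h | h <;>
        simp only [Finset.mem_map, inlE, inrE, Function.Embedding.coeFn_mk] at h
      · obtain ⟨s, hs, rfl⟩ := h; exact hT.1 s hs
      · obtain ⟨s, hs, rfl⟩ := h; exact (hL s).1 hs
    rcases hab with h | ⟨he, hm⟩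
    · rw [hrk, hb] at h; exact absurd h (lt_irrefl d)
    · rcases Finset.mem_union.1 ha with h | h <;>
        simp only [Finset.mem_map, inlE, inrE, Function.Embedding.coeFn_mk] at h
      · obtain ⟨s, hs, rfl⟩ := h
        rcases b with b | b
        · refine Finset.mem_union_left _ ?_
          simp only [Finset.mem_map, inlE, Function.Embedding.coeFn_mk]
          exact ⟨b, hT.2 s hs b hb hm, rfl⟩
        · refine Finset.mem_union_right _ ?_
          simp only [Finset.mem_map, inrE, Function.Embedding.coeFn_mk]
          exact ⟨b, (hL b).2 hb, rfl⟩
      · obtain ⟨s, hs, rfl⟩ := h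
        rcases b with b | b
        · exact absurd hm (by simp)
        · refine Finset.mem_union_right _ ?_
          simp only [Finset.mem_map, inrE, Function.Embedding.coeFn_mk]
          exact ⟨b, (hL b).2 hb, rfl⟩

end Aux2
section Aux3

variable [PartialOrder α] [Fintype α] [DecidableEq α]

lemma card_shadow_map_inr (Y : Finset α) :
    (_root_.shadow (Y.map inrE)).card = (_root_.shadow Y).card := by
  have h := shadow_map_union (∅ : Finset α) Y
  simp only [Finset.map_empty, Finset.empty_union, shadow_empty'] at h
  rw [h, Finset.card_map]

end Aux3
/-- If P is Macaulay, shadows of full levels are full levels, and the disjoint union of two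
copies of P is Macaulay with the union simplicial order, then P is additive. -/
theorem stmt14 {α : Type*} [PartialOrder α] [Fintype α] [DecidableEq α]
    (rank : α → ℕ) (lt : α → α → Prop) (hr : IsRankFn rank)
    (hM : MacaulayWith rank lt)
    (hfull : ∀ r : ℕ, shadow (Finset.univ.filter (fun x => rank x = r)) =
      Finset.univ.filter (fun x => rank x = r + 1))
    (hU : MacaulayWith (Sum.elim rank rank : α ⊕ α → ℕ) (usSum rank lt)) :
    IsAdditive rank lt := by
  classical
  obtain ⟨htri, htrans, hirr, hcomp, hinit⟩ := hM
  obtain ⟨_, _, _, hcompU, _⟩ := hU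
  have httri : ∀ a b : α, lt a b ∨ a = b ∨ lt b a := fun a b => by
    by_cases h1 : lt a b
    · exact Or.inl h1
    by_cases h2 : lt b a
    · exact Or.inr (Or.inr h2)
    exact Or.inr (Or.inl (htri.1 a b h1 h2))
  have htr : ∀ a b c : α, lt a b → lt b c → lt a c := htrans.1
  have hir : ∀ a : α, ¬ lt a a := hirr.1
  constructor
  · -- Part 1: initial segment A vs segment B
    intro d A B hA hB hcard
    obtain ⟨F, hF⟩ : ∃ F : Finset α, ∀ x, x ∈ F ↔ rank x = d ∧ ∀ a ∈ B, lt a x :=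
      ⟨Finset.univ.filter (fun x => rank x = d ∧ ∀ a ∈ B, lt a x), fun x => by simp⟩
    rcases Finset.eq_empty_or_nonempty A with rfl | hAne
    · have hB0 : B = ∅ := Finset.card_eq_zero.1 (by simpa using hcard.symm)
      have hns : newShadow rank lt d B = ∅ := by
        rw [newShadow_eq d B F hF, hB0, shadow_empty', Finset.empty_sdiff]
      simp [hns]
    · obtain ⟨a0, ha0⟩ := hAne
      have hFA : ∀ x, x ∈ (∅ : Finset α) ↔ rank x = d ∧ ∀ a ∈ A, lt a x := by
        intro x
        simp only [Finset.notMem_empty, false_iff]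
        rintro ⟨hxd, hall⟩
        exact hir x (hall x (hA.2 a0 ha0 x hxd (hall a0 ha0)))
      have hnsA : newShadow rank lt d A = _root_.shadow A := by
        rw [newShadow_eq d A ∅ hFA, shadow_empty', Finset.sdiff_empty]
      have hBFinit := BF_initSeg httri htr d B F hB hF
      have hdisj := B_F_disjoint hir d B F hF
      have hranks : ∀ x ∈ (A.map inlE ∪ F.map inrE), Sum.elim rank rank x = d := by
        intro x hx
        rcases Finset.mem_union.1 hx with h | h <;>
          simp only [Finset.mem_map, inlE, inrE, Function.Embedding.coeFn_mk] at h
        · obtain ⟨s, hs, rfl⟩ := h; exact hA.1 s hs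
        · obtain ⟨s, hs, rfl⟩ := h; exact ((hF s).1 hs).1
      have hSinit := usInit_inr d (B ∪ F) hBFinit
      have hcards : ((B ∪ F).map inrE).card = (A.map inlE ∪ F.map inrE).card := by
        rw [Finset.card_map, card_map_union, Finset.card_union_of_disjoint hdisj, hcard]
      have hkey := hcompU d (A.map inlE ∪ F.map inrE) ((B ∪ F).map inrE) hranks hSinit hcards
      have h1 := card_shadow_map_inr (B ∪ F)
      have h2 := card_shadow_map_union A F
      have h4 := newShadow_card_eq d B F hF
      rw [h1, h2] at hkey
      rw [hnsA]
      omega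
  · -- Part 2: segment B vs final segment C
    intro d B C hB hC hcard
    obtain ⟨F, hF⟩ : ∃ F : Finset α, ∀ x, x ∈ F ↔ rank x = d ∧ ∀ a ∈ B, lt a x :=
      ⟨Finset.univ.filter (fun x => rank x = d ∧ ∀ a ∈ B, lt a x), fun x => by simp⟩
    obtain ⟨G, hG⟩ : ∃ G : Finset α, ∀ x, x ∈ G ↔ rank x = d ∧ ∀ a ∈ C, lt a x :=
      ⟨Finset.univ.filter (fun x => rank x = d ∧ ∀ a ∈ C, lt a x), fun x => by simp⟩
    set L : Finset α := Finset.univ.filter (fun x => rank x = d) with hLdef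
    have hL : ∀ x, x ∈ L ↔ rank x = d := fun x => by simp [hLdef]
    have hCG : C ∪ G = L := by
      ext x
      rw [Finset.mem_union, hL x, hG x]
      constructor
      · rintro (h | ⟨h, _⟩)
        exacts [hC.1 x h, h]
      · intro hxd
        by_cases hxC : x ∈ C
        · exact Or.inl hxC
        · refine Or.inr ⟨hxd, fun a ha => ?_⟩
          rcases httri a x with h | h | h
          · exact h
          · exact absurd (h ▸ ha) hxC
          · exact absurd (hC.2 a ha x hxd h) hxC
    have hdisjCG := B_F_disjoint hir d C G hG
    have hcardCG : C.card + G.card = L.card := by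
      rw [← Finset.card_union_of_disjoint hdisjCG, hCG]
    have hFinit := F_initSeg (rank := rank) htr d B F hF
    have hBFinit := BF_initSeg httri htr d B F hB hF
    have hdisjBF := B_F_disjoint hir d B F hF
    have hTinit := usInit_mix d F L hFinit hL
    have hranks : ∀ x ∈ ((B ∪ F).map inlE ∪ G.map inrE), Sum.elim rank rank x = d := by
      intro x hx
      rcases Finset.mem_union.1 hx with h | h <;>
        simp only [Finset.mem_map, inlE, inrE, Function.Embedding.coeFn_mk] at h
      · obtain ⟨s, hs, rfl⟩ := h; exact hBFinit.1 s hs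
      · obtain ⟨s, hs, rfl⟩ := h; exact ((hG s).1 hs).1
    have h1 : (B ∪ F).card = B.card + F.card := Finset.card_union_of_disjoint hdisjBF
    have hcards : (F.map inlE ∪ L.map inrE).card = ((B ∪ F).map inlE ∪ G.map inrE).card := by
      rw [card_map_union, card_map_union, h1]
      omega
    have hkey := hcompU d ((B ∪ F).map inlE ∪ G.map inrE) (F.map inlE ∪ L.map inrE)
      hranks hTinit hcards
    have h2 := card_shadow_map_union F L
    have h3 := card_shadow_map_union (B ∪ F) G
    have h4 := newShadow_card_eq d B F hF
    have h5 := newShadow_card_eq d C G hG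
    rw [hCG] at h5
    rw [h2, h3] at hkey
    omega
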